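/- Let G be a groupoid and Pic a Picard groupoid (symmetric monoidal groupoid with invertible objects). For a connected groupoid Π₁(M) with a chosen object m, the set of isomorphism classes of functors Π₁(M) → Pic is in bijection with π₀(Pic) × Hom(π₁(M,m), π₁(Pic)) / conjugation, which when π₁(Pic) is abelian equals π₀(Pic) ⊕ H¹(π₁(M,m); A) where A = Aut_Pic(unit). -/

import Mathlib

open CategoryTheory MonoidalCategory

/-- Functors G ⥤ P up to natural isomorphism. -/
def functorIsoSetoid (G P : Type*) [Groupoid G] [Groupoid P] : Setoid (G ⥤ P) where
  r F F' := Nonempty (F ≅ F')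
  iseqv := ⟨fun F => ⟨Iso.refl F⟩, fun ⟨i⟩ => ⟨i.symm⟩, fun ⟨i⟩ ⟨j⟩ => ⟨i.trans j⟩⟩

namespace Stmt10Aux

variable {P : Type*} [Groupoid P] [MonoidalCategory P]

/-- An endomorphism in a groupoid, as an automorphism. -/
noncomputable def autOf {C : Type*} [Groupoid C] {X : C} (f : X ⟶ X) : Aut X := asIso f

lemma autOf_hom {C : Type*} [Groupoid C] {X : C} (f : X ⟶ X) : (autOf f).hom = f := rfl

lemma autOf_id {C : Type*} [Groupoid C] (X : C) : autOf (𝟙 X) = 1 := by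
  ext; rfl

lemma autOf_comp {C : Type*} [Groupoid C] {X : C} (f g : X ⟶ X) :
    autOf (f ≫ g) = autOf g * autOf f := by
  ext; rfl

/-- The canonical action of `Aut (𝟙_ P)` on any object. -/
def psi (X : P) : Aut (𝟙_ P) →* Aut X where
  toFun u := (λ_ X).symm ≪≫ whiskerRightIso u X ≪≫ λ_ X
  map_one' := by
    ext
    show (λ_ X).inv ≫ (𝟙 (𝟙_ P)) ▷ X ≫ (λ_ X).hom = 𝟙 X
    simp
  map_mul' u v := by
    ext
    show (λ_ X).inv ≫ (v.hom ≫ u.hom) ▷ X ≫ (λ_ X).hom =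
      ((λ_ X).inv ≫ v.hom ▷ X ≫ (λ_ X).hom) ≫ ((λ_ X).inv ≫ u.hom ▷ X ≫ (λ_ X).hom)
    simp [comp_whiskerRight]

lemma psi_hom (X : P) (u : Aut (𝟙_ P)) :
    (psi X u).hom = (λ_ X).inv ≫ u.hom ▷ X ≫ (λ_ X).hom := rfl

lemma psi_naturality {X Y : P} (f : X ⟶ Y) (u : Aut (𝟙_ P)) :
    f ≫ (psi Y u).hom = (psi X u).hom ≫ f := by
  simp only [psi_hom]
  have h1 : f ≫ (λ_ Y).inv = (λ_ X).inv ≫ 𝟙_ P ◁ f := by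
    rw [Iso.comp_inv_eq, Category.assoc, leftUnitor_naturality, Iso.inv_hom_id_assoc]
  have h2 : 𝟙_ P ◁ f ≫ u.hom ▷ Y = u.hom ▷ X ≫ 𝟙_ P ◁ f := whisker_exchange u.hom f
  rw [← Category.assoc, h1, Category.assoc, Category.assoc, ← Category.assoc (𝟙_ P ◁ f),
    h2, Category.assoc, leftUnitor_naturality]
  simp

lemma psi_unit (u : Aut (𝟙_ P)) : psi (𝟙_ P) u = u := by
  ext
  have huw : u.hom ▷ 𝟙_ P = (λ_ (𝟙_ P)).hom ≫ u.hom ≫ (λ_ (𝟙_ P)).inv := by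
    rw [MonoidalCategory.whiskerRight_id, unitors_equal, unitors_inv_equal]
  rw [psi_hom, huw]
  simp

lemma psi_whiskerRight (X Y : P) (u : Aut (𝟙_ P)) :
    (psi X u).hom ▷ Y = (psi (X ⊗ Y) u).hom := by
  simp only [psi_hom, comp_whiskerRight, whiskerRight_tensor,
    leftUnitor_tensor_hom, leftUnitor_tensor_inv]
  simp

lemma whiskerRight_cancel {X X' Y Z : P} (e2 : Y ⊗ Z ≅ 𝟙_ P) {g g' : X ⟶ X'}
    (h : g ▷ Y = g' ▷ Y) : g = g' := by
  have h2 : g ▷ (Y ⊗ Z) = g' ▷ (Y ⊗ Z) := by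
    rw [whiskerRight_tensor, whiskerRight_tensor, h]
  have h3 : g ▷ 𝟙_ P = g' ▷ 𝟙_ P := by
    have e1 := whisker_exchange g e2.hom
    have e2' := whisker_exchange g' e2.hom
    -- X ◁ e2.hom ≫ g ▷ 𝟙 = g ▷ (Y ⊗ Z) ≫ X' ◁ e2.hom
    rw [← cancel_epi (X ◁ e2.hom), e1, e2', h2]
  rw [MonoidalCategory.whiskerRight_id, MonoidalCategory.whiskerRight_id] at h3
  simpa using h3

lemma psi_bijective (hinv : ∀ X : P, ∃ Y : P, Nonempty (X ⊗ Y ≅ 𝟙_ P))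
    [SymmetricCategory P] (X : P) : Function.Bijective (psi X) := by
  obtain ⟨Y, ⟨e⟩⟩ := hinv X
  have e2 : Y ⊗ X ≅ 𝟙_ P := (β_ Y X) ≪≫ e
  have key : ∀ u : Aut (𝟙_ P), e.inv ≫ ((psi X u).hom ▷ Y) ≫ e.hom = u.hom := by
    intro u
    rw [psi_whiskerRight, ← Category.assoc, psi_naturality e.inv u, psi_unit]
    simp
  constructor
  · intro u v huv
    ext
    rw [← key u, ← key v, huv]
  · intro g
    refine ⟨asIso (e.inv ≫ g.hom ▷ Y ≫ e.hom), ?_⟩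
    set u : Aut (𝟙_ P) := asIso (e.inv ≫ g.hom ▷ Y ≫ e.hom) with hu
    have h1 : e.inv ≫ ((psi X u).hom ▷ Y) ≫ e.hom = e.inv ≫ g.hom ▷ Y ≫ e.hom := by
      rw [key u]; rfl
    have h2 : (psi X u).hom ▷ Y = g.hom ▷ Y := by
      rwa [cancel_epi e.inv, cancel_mono e.hom] at h1
    ext
    exact whiskerRight_cancel e2 h2

variable [SymmetricCategory P]

/-- `psi` as a multiplicative equivalence, for a Picard groupoid. -/
noncomputable def psiEquiv (hinv : ∀ X : P, ∃ Y : P, Nonempty (X ⊗ Y ≅ 𝟙_ P)) (X : P) :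
    Aut (𝟙_ P) ≃* Aut X :=
  MulEquiv.ofBijective (psi X) (psi_bijective hinv X)

lemma psiEquiv_apply (hinv : ∀ X : P, ∃ Y : P, Nonempty (X ⊗ Y ≅ 𝟙_ P)) (X : P)
    (u : Aut (𝟙_ P)) : psiEquiv hinv X u = psi X u := rfl

lemma psiEquiv_symm_conj (hinv : ∀ X : P, ∃ Y : P, Nonempty (X ⊗ Y ≅ 𝟙_ P)) {X X' : P}
    (h : X ≅ X') (a : Aut X) (a' : Aut X') (hc : a'.hom = h.inv ≫ a.hom ≫ h.hom) :
    (psiEquiv hinv X').symm a' = (psiEquiv hinv X).symm a := by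
  set u := (psiEquiv hinv X).symm a with hu
  have ha : psi X u = a := (psiEquiv hinv X).apply_symm_apply a
  have : psi X' u = a' := by
    ext
    rw [hc, ← ha]
    rw [Iso.eq_inv_comp]
    exact psi_naturality h.hom u
  rw [← this, MulEquiv.symm_apply_eq]
  rfl

variable {G : Type*} [Groupoid G]

/-- The monodromy homomorphism of a functor `F : G ⥤ P` at a base point `m`. -/
noncomputable def rho (hinv : ∀ X : P, ∃ Y : P, Nonempty (X ⊗ Y ≅ 𝟙_ P)) (m : G)
    (F : G ⥤ P) : (m ⟶ m) →* Aut (𝟙_ P) where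
  toFun g := (psiEquiv hinv (F.obj m)).symm (autOf (F.map g⁻¹))
  map_one' := by
    show (psiEquiv hinv (F.obj m)).symm (autOf (F.map ((1 : m ⟶ m)⁻¹))) = 1
    have h1 : ((1 : m ⟶ m)⁻¹ : m ⟶ m) = 𝟙 m := by
      rw [inv_one]; rfl
    rw [h1]
    have h2 : autOf (F.map (𝟙 m)) = 1 := by
      rw [F.map_id, autOf_id]
    rw [h2, map_one]
  map_mul' g h := by
    show (psiEquiv hinv (F.obj m)).symm (autOf (F.map ((g * h)⁻¹))) = _
    have h1 : ((g * h)⁻¹ : m ⟶ m) = (h⁻¹ : m ⟶ m) ≫ (g⁻¹ : m ⟶ m) := mul_inv_rev g h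
    have h2 : autOf (F.map ((g * h)⁻¹)) =
        autOf (F.map g⁻¹) * autOf (F.map h⁻¹) := by
      rw [h1, F.map_comp, autOf_comp]
    rw [h2, map_mul]

lemma rho_apply (hinv : ∀ X : P, ∃ Y : P, Nonempty (X ⊗ Y ≅ 𝟙_ P)) (m : G)
    (F : G ⥤ P) (g : m ⟶ m) :
    rho hinv m F g = (psiEquiv hinv (F.obj m)).symm (autOf (F.map g⁻¹)) := rfl

open Classical in
/-- A choice of a morphism from the basepoint to every object, equal to `𝟙 m` at `m`. -/
noncomputable def pmap [IsPreconnected G] (m : G) (x : G) : m ⟶ x :=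
  if h : m = x then eqToHom h else (nonempty_hom_of_preconnected_groupoid m x).some

lemma pmap_self [IsPreconnected G] (m : G) : pmap m m = 𝟙 m := by
  simp [pmap]

/-- The functor associated to an object `X` and a homomorphism `ρ`. -/
noncomputable def mkFunctor [IsPreconnected G] (hinv : ∀ X : P, ∃ Y : P, Nonempty (X ⊗ Y ≅ 𝟙_ P))
    (m : G) (X : P) (ρ : (m ⟶ m) →* Aut (𝟙_ P)) : G ⥤ P where
  obj _ := X
  map {x y} f := (psiEquiv hinv X (ρ ((pmap m x ≫ f ≫ Groupoid.inv (pmap m y))⁻¹))).hom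
  map_id x := by
    show (psiEquiv hinv X (ρ ((pmap m x ≫ 𝟙 x ≫ Groupoid.inv (pmap m x))⁻¹))).hom = 𝟙 X
    have h0 : (pmap m x ≫ 𝟙 x ≫ Groupoid.inv (pmap m x)) = (1 : m ⟶ m) := by
      rw [Category.id_comp, Groupoid.comp_inv]; rfl
    rw [h0, inv_one, map_one, map_one]
    rfl
  map_comp {x y z} f g := by
    show (psiEquiv hinv X (ρ ((pmap m x ≫ (f ≫ g) ≫ Groupoid.inv (pmap m z))⁻¹))).hom =
      (psiEquiv hinv X (ρ ((pmap m x ≫ f ≫ Groupoid.inv (pmap m y))⁻¹))).hom ≫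
      (psiEquiv hinv X (ρ ((pmap m y ≫ g ≫ Groupoid.inv (pmap m z))⁻¹))).hom
    have hs : (pmap m x ≫ f ≫ Groupoid.inv (pmap m y)) *
        (pmap m y ≫ g ≫ Groupoid.inv (pmap m z)) =
        (pmap m x ≫ (f ≫ g) ≫ Groupoid.inv (pmap m z)) := by
      show (pmap m x ≫ f ≫ Groupoid.inv (pmap m y)) ≫
        (pmap m y ≫ g ≫ Groupoid.inv (pmap m z)) = _
      simp [Groupoid.inv_comp]
    have : ((pmap m x ≫ (f ≫ g) ≫ Groupoid.inv (pmap m z))⁻¹ : m ⟶ m) =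
        (pmap m y ≫ g ≫ Groupoid.inv (pmap m z))⁻¹ *
        (pmap m x ≫ f ≫ Groupoid.inv (pmap m y))⁻¹ := by
      rw [← hs, mul_inv_rev]
    rw [this, map_mul, map_mul]
    rfl

end Stmt10Aux

open Stmt10Aux in
/-- Let Π₁(M) be a connected groupoid with chosen object m, and let Pic be a
Picard groupoid (a symmetric monoidal groupoid all of whose objects are ⊗-invertible; its
π₁ = Aut(𝟙) is automatically abelian).  Then isomorphism classes of functors Π₁(M) → Pic are
in bijection with π₀(Pic) × Hom(π₁(M,m), Aut(𝟙)) = π₀(Pic) ⊕ H¹(π₁(M,m); A), A = Aut(unit). -/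
theorem stmt_10 {G : Type*} [Groupoid G] [IsConnected G] (m : G)
    {P : Type*} [Groupoid P] [MonoidalCategory P] [SymmetricCategory P]
    (hinv : ∀ X : P, ∃ Y : P, Nonempty (X ⊗ Y ≅ 𝟙_ P)) :
    Nonempty ((Quotient (functorIsoSetoid G P)) ≃
      (Quotient (isIsomorphicSetoid P)) × ((m ⟶ m) →* Aut (𝟙_ P))) := by
  classical
  -- the forward map
  have wd : ∀ F F' : G ⥤ P, (functorIsoSetoid G P).r F F' →
      ((Quotient.mk (isIsomorphicSetoid P) (F.obj m), rho hinv m F) =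
        (Quotient.mk (isIsomorphicSetoid P) (F'.obj m), rho hinv m F')) := by
    intro F F' ⟨α⟩
    refine Prod.ext (Quotient.sound ⟨α.app m⟩) ?_
    refine MonoidHom.ext fun g => ?_
    rw [rho_apply, rho_apply]
    refine (psiEquiv_symm_conj hinv (α.app m) _ _ ?_).symm
    show F'.map (g⁻¹) = (α.app m).inv ≫ F.map (g⁻¹) ≫ (α.app m).hom
    rw [Iso.eq_inv_comp]
    exact (α.hom.naturality (g⁻¹ : m ⟶ m)).symm
  let Φ : Quotient (functorIsoSetoid G P) →
      (Quotient (isIsomorphicSetoid P)) × ((m ⟶ m) →* Aut (𝟙_ P)) :=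
    Quotient.lift (fun F => (Quotient.mk (isIsomorphicSetoid P) (F.obj m), rho hinv m F)) wd
  have hinj : Function.Injective Φ := by
    rintro ⟨F⟩ ⟨F'⟩ hFF'
    have h1 : Quotient.mk (isIsomorphicSetoid P) (F.obj m) =
        Quotient.mk (isIsomorphicSetoid P) (F'.obj m) := congrArg Prod.fst hFF'
    have h2 : rho hinv m F = rho hinv m F' := congrArg Prod.snd hFF'
    obtain ⟨h⟩ := Quotient.exact h1
    -- key conjugation relation
    have key : ∀ g : m ⟶ m, F'.map g = h.inv ≫ F.map g ≫ h.hom := by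
      intro g
      have e1 : rho hinv m F (g⁻¹) = rho hinv m F' (g⁻¹) := by rw [h2]
      rw [rho_apply, rho_apply, inv_inv] at e1
      have e2 : (psiEquiv hinv (F'.obj m)).symm
          (⟨h.inv ≫ F.map g ≫ h.hom, h.inv ≫ CategoryTheory.inv (F.map g) ≫ h.hom, by
            simp, by simp⟩ : Aut (F'.obj m)) =
          (psiEquiv hinv (F.obj m)).symm (autOf (F.map g)) :=
        psiEquiv_symm_conj hinv h _ _ rfl
      rw [e1] at e2
      have := (psiEquiv hinv (F'.obj m)).symm.injective e2
      have := congrArg Iso.hom this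
      simpa [autOf_hom] using this.symm
    apply Quotient.sound
    refine ⟨NatIso.ofComponents
      (fun x => F.mapIso (asIso (pmap m x)).symm ≪≫ h ≪≫ F'.mapIso (asIso (pmap m x))) ?_⟩
    intro x y f
    have hk := key (pmap m x ≫ f ≫ CategoryTheory.inv (pmap m y))
    simp only [Functor.map_comp, Functor.map_inv] at hk
    have hk2 : h.hom ≫ F'.map (pmap m x) ≫ F'.map f ≫ CategoryTheory.inv (F'.map (pmap m y)) =
        F.map (pmap m x) ≫ F.map f ≫ CategoryTheory.inv (F.map (pmap m y)) ≫ h.hom := by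
      rw [hk, Iso.hom_inv_id_assoc]
      simp only [Category.assoc]
    dsimp
    simp only [Iso.symm_hom, asIso_inv, Functor.map_inv, asIso_hom]
    rw [← cancel_epi (F.map (pmap m x)), ← cancel_mono (CategoryTheory.inv (F'.map (pmap m y)))]
    simp only [Category.assoc, IsIso.hom_inv_id_assoc, IsIso.hom_inv_id, Category.comp_id,
      IsIso.inv_hom_id, IsIso.inv_hom_id_assoc]
    rw [← hk2]
  have hsurj : Function.Surjective Φ := by
    rintro ⟨q, ρ⟩
    obtain ⟨X, rfl⟩ := Quotient.exists_rep q
    refine ⟨Quotient.mk _ (mkFunctor hinv m X ρ), ?_⟩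
    have h1 : Φ (Quotient.mk _ (mkFunctor hinv m X ρ)) =
        (Quotient.mk (isIsomorphicSetoid P) X, rho hinv m (mkFunctor hinv m X ρ)) := rfl
    rw [h1]
    refine Prod.ext rfl ?_
    refine MonoidHom.ext fun g => ?_
    rw [rho_apply]
    have hmap : (mkFunctor hinv m X ρ).map (g⁻¹ : m ⟶ m) =
        (psiEquiv hinv X (ρ g)).hom := by
      show (psiEquiv hinv X (ρ ((pmap m m ≫ (g⁻¹ : m ⟶ m) ≫ Groupoid.inv (pmap m m))⁻¹))).hom
        = _
      rw [pmap_self]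
      congr 2
      have : Groupoid.inv (𝟙 m) = 𝟙 m := by
        rw [Groupoid.inv_eq_inv]; simp
      rw [this, Category.id_comp, Category.comp_id, inv_inv]
    have h3 : autOf ((mkFunctor hinv m X ρ).map (g⁻¹ : m ⟶ m)) = psiEquiv hinv X (ρ g) := by
      ext
      rw [autOf_hom, hmap]
    show (psiEquiv hinv X).symm (autOf ((mkFunctor hinv m X ρ).map (g⁻¹ : m ⟶ m))) = ρ g
    exact (MulEquiv.symm_apply_eq _).mpr h3
  exact ⟨Equiv.ofBijective Φ ⟨hinj, hsurj⟩⟩
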